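/- For every rooted tree T, the toric ideal ker φ_{B*_T} ⊆ ℂ[p_⋆, p_ij : 0 ≤ i < j ≤ n] is the extension of the toric ideal ker φ_{B_T} ⊆ ℂ[p_ij : 0 ≤ i < j ≤ n]; that is, ker φ_{B*_T} is generated by the image of ker φ_{B_T} under the natural inclusion of polynomial rings ℂ[p_ij : 0 ≤ i < j ≤ n] ↪ ℂ[p_⋆, p_ij : 0 ≤ i < j ≤ n]. -/
import Mathlib


attribute [local instance] Classical.propDecidable

/-- A rooted tree on leaves `0, …, n`, rooted at the leaf `0`, with all edges directed
away from the root, no vertices of degree two, together with its (uniquely determined)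
most-recent-common-ancestor function `lca` on leaf labels.  The parent map `par` sends
every non-root vertex to the vertex its unique incoming edge comes from, and fixes the
root.  A vertex `u` is a descendant of `v` iff some iterate of `par` sends `u` to `v`. -/
structure PhyloTree where
  n : ℕ
  hn : 1 ≤ n
  V : Type
  fintypeV : Fintype V
  leaf : Fin (n + 1) ↪ V
  par : V → V
  par_root : par (leaf 0) = leaf 0
  par_ne : ∀ v : V, v ≠ leaf 0 → par v ≠ v
  reaches_root : ∀ v : V, ∃ k : ℕ, par^[k] v = leaf 0
  leaf_iff : ∀ v : V, v ≠ leaf 0 → (v ∈ Set.range leaf ↔ ∀ u, par u ≠ v)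
  root_unique_child : ∃! u : V, u ≠ leaf 0 ∧ par u = leaf 0
  no_degree_two : ∀ v : V, v ∉ Set.range leaf → ∃ u w : V, u ≠ w ∧ par u = v ∧ par w = v
  lca : Fin (n + 1) → Fin (n + 1) → V
  lca_anc_left : ∀ i j, ∃ k : ℕ, par^[k] (leaf i) = lca i j
  lca_anc_right : ∀ i j, ∃ k : ℕ, par^[k] (leaf j) = lca i j
  lca_min : ∀ i j (w : V), (∃ k : ℕ, par^[k] (leaf i) = w) →
      (∃ k : ℕ, par^[k] (leaf j) = w) → ∃ k : ℕ, par^[k] (lca i j) = w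

instance (T : PhyloTree) : Fintype T.V := T.fintypeV

/-- `T.isAnc v u` : `v` is an ancestor of `u`, i.e. `u` is a descendant of `v`
(every vertex is a descendant of itself). -/
def PhyloTree.isAnc (T : PhyloTree) (v u : T.V) : Prop := ∃ k : ℕ, T.par^[k] u = v

/-- The 2-element subsets `{i,j}` of `{0, …, n}`, encoded as ordered pairs `i < j`. -/
abbrev PairIdx (n : ℕ) := {q : Fin (n + 1) × Fin (n + 1) // q.1 < q.2}

/-- The non-root vertices of `T`; these index the rows of `A_T`, and are also in
bijection `v ↦ e(v)` with the edges of `T`, so they also index the rows of `B_T`. -/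
abbrev PhyloTree.NR (T : PhyloTree) := {v : T.V // v ≠ T.leaf 0}

/-- The matrix `A_T`, with rows indexed by non-root vertices and columns indexed by
2-element subsets `{i,j}` of `{0, …, n}`: the entry is `1` if `v = i`, `v = j` or
`v = lca(i,j)`, and `0` otherwise. -/
noncomputable def Amat (T : PhyloTree) (R : Type*) [Zero R] [One R] :
    Matrix T.NR (PairIdx T.n) R :=
  Matrix.of fun v s =>
    if v.1 = T.leaf s.1.1 ∨ v.1 = T.leaf s.1.2 ∨ v.1 = T.lca s.1.1 s.1.2 then 1 else 0

/-- `T.onPath v i j` : the edge `e(v)` lies on the unique path between the leaves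
`i` and `j`, i.e. `v` lies strictly below `lca(i,j)` on the segment from `lca(i,j)`
down to `i` or on the segment from `lca(i,j)` down to `j`. -/
def PhyloTree.onPath (T : PhyloTree) (v : T.V) (i j : Fin (T.n + 1)) : Prop :=
  v ≠ T.lca i j ∧ T.isAnc (T.lca i j) v ∧ (T.isAnc v (T.leaf i) ∨ T.isAnc v (T.leaf j))

/-- The matrix `B_T`, with rows indexed by the edges `e(v)` of `T` (equivalently, by the
non-root vertices `v`) and columns indexed by 2-element subsets `{i,j}` of `{0, …, n}`:
the entry is `1` if `e(v) ∈ P(i,j)` and `0` otherwise. -/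
noncomputable def Bmat (T : PhyloTree) (R : Type*) [Zero R] [One R] :
    Matrix T.NR (PairIdx T.n) R :=
  Matrix.of fun v s => if T.onPath v.1 s.1.1 s.1.2 then 1 else 0

/-- The monomial map `φ_M` associated to a nonnegative-integer matrix `M`, sending
`p_c` to `∏_r t_r ^ M(r,c)`. -/
noncomputable def toricMap {R C : Type*} [Fintype R] (M : Matrix R C ℕ) :
    MvPolynomial C ℂ →ₐ[ℂ] MvPolynomial R ℂ :=
  MvPolynomial.aeval fun c => ∏ r : R, MvPolynomial.X r ^ M r c
/-- The matrix `B*_T`, obtained from `B_T` by adjoining a column of all zeros (indexed by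
the symbol `⋆`, here `none`) and then a row of all ones. -/
noncomputable def BstarMat (T : PhyloTree) :
    Matrix (Option T.NR) (Option (PairIdx T.n)) ℕ :=
  Matrix.of fun r c =>
    match r, c with
    | some e, some s => Bmat T ℕ e s
    | some _, none => 0
    | none, _ => 1


/-! ### Auxiliary material for statement9 -/

open MvPolynomial

namespace Toric

variable {R C : Type*} [Fintype R]

/-- The image of an exponent vector under the monomial map of `M`. -/
noncomputable def mvec (M : Matrix R C ℕ) (u : C →₀ ℕ) : R →₀ ℕ :=
  Finsupp.equivFunOnFinite.symm fun r => u.sum fun c k => M r c * k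

lemma mvec_apply (M : Matrix R C ℕ) (u : C →₀ ℕ) (r : R) :
    mvec M u r = u.sum fun c k => M r c * k := rfl

lemma prod_X_pow_eq (w : R →₀ ℕ) :
    (∏ r : R, (X r : MvPolynomial R ℂ) ^ w r) = monomial w 1 := by
  rw [← MvPolynomial.prod_X_pow_eq_monomial]
  exact (Finset.prod_subset (Finset.subset_univ _) (by
    intro x _ hx
    rw [Finsupp.notMem_support_iff.mp hx, pow_zero])).symm

lemma toricMap_monomial (M : Matrix R C ℕ) (u : C →₀ ℕ) (a : ℂ) :
    toricMap M (monomial u a) = monomial (mvec M u) a := by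
  have h1 : (u.prod fun c k => (∏ r : R, (X r : MvPolynomial R ℂ) ^ M r c) ^ k)
      = ∏ r : R, (X r : MvPolynomial R ℂ) ^ (mvec M u r) := by
    rw [Finsupp.prod]
    have hstep : ∀ c ∈ u.support, (∏ r : R, (X r : MvPolynomial R ℂ) ^ M r c) ^ u c
        = ∏ r : R, (X r : MvPolynomial R ℂ) ^ (M r c * u c) := by
      intro c _
      rw [← Finset.prod_pow]
      exact Finset.prod_congr rfl fun r _ => (pow_mul _ _ _).symm
    rw [Finset.prod_congr rfl hstep, Finset.prod_comm]
    refine Finset.prod_congr rfl fun r _ => ?_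
    rw [Finset.prod_pow_eq_pow_sum]
    rfl
  calc toricMap M (monomial u a)
      = algebraMap ℂ _ a * u.prod fun c k =>
          (∏ r : R, (X r : MvPolynomial R ℂ) ^ M r c) ^ k := by
        rw [toricMap, aeval_monomial]
    _ = MvPolynomial.C a * ∏ r : R, (X r : MvPolynomial R ℂ) ^ (mvec M u r) := by
        rw [h1]; rfl
    _ = monomial (mvec M u) a := by
        rw [prod_X_pow_eq, C_mul_monomial, mul_one]

lemma toricMap_apply (M : Matrix R C ℕ) (f : MvPolynomial C ℂ) :
    toricMap M f = ∑ u ∈ f.support, monomial (mvec M u) (f.coeff u) := by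
  conv_lhs => rw [f.as_sum]
  rw [map_sum]
  exact Finset.sum_congr rfl fun u _ => toricMap_monomial M u _

lemma coeff_toricMap (M : Matrix R C ℕ) (f : MvPolynomial C ℂ) (w : R →₀ ℕ) :
    (toricMap M f).coeff w = ∑ u ∈ f.support, if mvec M u = w then f.coeff u else 0 := by
  rw [toricMap_apply, coeff_sum]
  exact Finset.sum_congr rfl fun u _ => coeff_monomial _ _ _

lemma ker_le_of_binomials (M : Matrix R C ℕ) (J : Ideal (MvPolynomial C ℂ))
    (hJ : ∀ u v : C →₀ ℕ, mvec M u = mvec M v →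
      (monomial u 1 - monomial v 1 : MvPolynomial C ℂ) ∈ J) :
    RingHom.ker (toricMap M) ≤ J := by
  suffices H : ∀ N (f : MvPolynomial C ℂ), f.support.card = N → toricMap M f = 0 → f ∈ J by
    intro f hf
    exact H _ f rfl (RingHom.mem_ker.mp hf)
  intro N
  induction N using Nat.strong_induction_on with
  | _ N ih =>
    intro f hN hf
    rcases Finset.eq_empty_or_nonempty f.support with hs | ⟨u₀, hu₀⟩
    · have : f = 0 := by rwa [← MvPolynomial.support_eq_empty]
      simp [this]
    have hc0 : f.coeff u₀ ≠ 0 := MvPolynomial.mem_support_iff.mp hu₀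
    have hsum : ∑ u ∈ f.support, (if mvec M u = mvec M u₀ then f.coeff u else 0) = 0 := by
      rw [← coeff_toricMap, hf, MvPolynomial.coeff_zero]
    obtain ⟨u₁, hu₁s, hu₁⟩ : ∃ u₁ ∈ f.support.erase u₀,
        (if mvec M u₁ = mvec M u₀ then f.coeff u₁ else 0) ≠ 0 := by
      by_contra hcon
      push_neg at hcon
      rw [← Finset.add_sum_erase _ _ hu₀, Finset.sum_eq_zero hcon, add_zero, if_pos rfl] at hsum
      exact hc0 hsum
    have hmv : mvec M u₁ = mvec M u₀ := by
      by_contra h; rw [if_neg h] at hu₁; exact hu₁ rfl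
    have hu₁f : u₁ ∈ f.support := Finset.mem_of_mem_erase hu₁s
    have hne : u₁ ≠ u₀ := Finset.ne_of_mem_erase hu₁s
    set c := f.coeff u₀ with hc
    set b : MvPolynomial C ℂ := monomial u₀ c - monomial u₁ c with hb
    have hbJ : b ∈ J := by
      have h2 : b = MvPolynomial.C c * (monomial u₀ 1 - monomial u₁ 1) := by
        rw [hb, mul_sub, C_mul_monomial, C_mul_monomial, mul_one]
      rw [h2]
      exact Ideal.mul_mem_left _ _ (hJ u₀ u₁ hmv.symm)
    have hbker : toricMap M b = 0 := by
      rw [hb, map_sub, toricMap_monomial, toricMap_monomial, hmv, sub_self]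
    set f' := f - b with hf'
    have hker' : toricMap M f' = 0 := by rw [hf', map_sub, hf, hbker, sub_self]
    have hsupp : f'.support ⊆ f.support.erase u₀ := by
      intro w hw
      rw [MvPolynomial.mem_support_iff] at hw
      have hcoeff : f'.coeff w
          = f.coeff w - ((if u₀ = w then c else 0) - (if u₁ = w then c else 0)) := by
        rw [hf', hb]
        simp [MvPolynomial.coeff_sub, MvPolynomial.coeff_monomial]
      rcases eq_or_ne w u₀ with rfl | hwne
      · exact absurd (by rw [hcoeff, if_pos rfl, if_neg hne, sub_zero, sub_self]) hw
      · rw [Finset.mem_erase]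
        refine ⟨hwne, ?_⟩
        by_contra hnotin
        have h0 : f.coeff w = 0 := MvPolynomial.notMem_support_iff.mp hnotin
        have h1 : u₁ ≠ w := fun h => hnotin (h ▸ hu₁f)
        apply hw
        rw [hcoeff, h0, if_neg (fun h : u₀ = w => hwne h.symm), if_neg h1]
        ring
    have hcard : f'.support.card < N := by
      calc f'.support.card ≤ (f.support.erase u₀).card := Finset.card_le_card hsupp
        _ < f.support.card := Finset.card_erase_lt_of_mem hu₀
        _ = N := hN
    have hf'J : f' ∈ J := ih _ hcard f' rfl hker'
    have hfeq : f = f' + b := by rw [hf']; ring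
    rw [hfeq]
    exact Ideal.add_mem J hf'J hbJ

lemma sum_eq_of_mvec_eq (M : Matrix R C ℕ) (w : R → ℕ) (d : ℕ) (hd : d ≠ 0)
    (hw : ∀ c, ∑ r : R, w r * M r c = d) {u v : C →₀ ℕ}
    (h : mvec M u = mvec M v) : (u.sum fun _ k => k) = v.sum fun _ k => k := by
  have key : ∀ u : C →₀ ℕ, ∑ r : R, w r * mvec M u r = d * u.sum fun _ k => k := by
    intro u
    simp only [mvec_apply, Finsupp.sum, Finset.mul_sum]
    rw [Finset.sum_comm]
    refine Finset.sum_congr rfl fun c _ => ?_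
    calc ∑ r : R, w r * (M r c * u c) = (∑ r : R, w r * M r c) * u c := by
          rw [Finset.sum_mul]
          exact Finset.sum_congr rfl fun r _ => (mul_assoc _ _ _).symm
      _ = d * u c := by rw [hw]
  have h2 : d * (u.sum fun _ k => k) = d * v.sum fun _ k => k := by
    rw [← key, ← key, h]
  exact Nat.eq_of_mul_eq_mul_left (Nat.pos_of_ne_zero hd) h2

end Toric

namespace PhyloTree

variable (T : PhyloTree)

lemma isAnc_refl (v : T.V) : T.isAnc v v := ⟨0, rfl⟩

lemma isAnc_root (v : T.V) : T.isAnc (T.leaf 0) v := T.reaches_root v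

lemma no_par_leaf {m : Fin (T.n + 1)} (hm : m ≠ 0) (u : T.V) : T.par u ≠ T.leaf m := by
  have hne : T.leaf m ≠ T.leaf 0 := fun h => hm (T.leaf.injective h)
  exact (T.leaf_iff _ hne).mp ⟨m, rfl⟩ u

lemma eq_of_isAnc_leaf {m : Fin (T.n + 1)} (hm : m ≠ 0) {v : T.V}
    (h : T.isAnc (T.leaf m) v) : v = T.leaf m := by
  obtain ⟨k, hk⟩ := h
  cases k with
  | zero => exact hk
  | succ k =>
    rw [Function.iterate_succ_apply'] at hk
    exact absurd hk (T.no_par_leaf hm _)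

lemma isAnc_antisymm {a b : T.V} (hab : T.isAnc a b) (hba : T.isAnc b a) : a = b := by
  obtain ⟨k, hk⟩ := hab
  obtain ⟨m, hm⟩ := hba
  rcases Nat.eq_zero_or_pos (m + k) with h0 | hpos
  · have hk0 : k = 0 := by omega
    subst hk0
    exact hk.symm
  · have hNb : T.par^[m + k] b = b := by
      rw [Function.iterate_add_apply, hk, hm]
    obtain ⟨K, hK⟩ := T.reaches_root b
    have hmulb : T.par^[(m + k) * K] b = b := by
      rw [Function.iterate_mul]
      exact Function.iterate_fixed hNb K
    have hbroot : b = T.leaf 0 := by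
      have hle : K ≤ (m + k) * K := Nat.le_mul_of_pos_left K hpos
      have hx : T.par^[((m + k) * K - K) + K] b = b := by
        rw [Nat.sub_add_cancel hle]; exact hmulb
      rw [Function.iterate_add_apply, hK, Function.iterate_fixed T.par_root] at hx
      exact hx.symm
    subst hbroot
    have ha : a = T.leaf 0 := by rw [← hk]; exact Function.iterate_fixed T.par_root k
    rw [ha]

lemma isAnc_child {u₀ : T.V} (h1 : u₀ ≠ T.leaf 0) (h2 : T.par u₀ = T.leaf 0) :
    ∀ k (v : T.V), v ≠ T.leaf 0 → T.par^[k] v = T.leaf 0 → T.isAnc u₀ v := by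
  intro k
  induction k with
  | zero => intro v hv hk; exact absurd hk hv
  | succ k ih =>
    intro v hv hk
    rw [Function.iterate_succ_apply] at hk
    rcases eq_or_ne (T.par v) (T.leaf 0) with hp | hp
    · obtain ⟨w, -, huniq⟩ := T.root_unique_child
      rw [huniq v ⟨hv, hp⟩, ← huniq u₀ ⟨h1, h2⟩]
      exact ⟨0, rfl⟩
    · obtain ⟨m, hm⟩ := ih (T.par v) hp hk
      exact ⟨m + 1, by rw [Function.iterate_succ_apply]; exact hm⟩

lemma isAnc_child' {u₀ : T.V} (h1 : u₀ ≠ T.leaf 0) (h2 : T.par u₀ = T.leaf 0)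
    {v : T.V} (hv : v ≠ T.leaf 0) : T.isAnc u₀ v := by
  obtain ⟨k, hk⟩ := T.reaches_root v
  exact T.isAnc_child h1 h2 k v hv hk

lemma lca_zero (j : Fin (T.n + 1)) : T.lca 0 j = T.leaf 0 := by
  obtain ⟨k, hk⟩ := T.lca_anc_left 0 j
  rw [Function.iterate_fixed T.par_root] at hk
  exact hk.symm

lemma lca_ne_left {i j : Fin (T.n + 1)} (hi : i ≠ 0) (hij : i ≠ j) :
    T.lca i j ≠ T.leaf i := by
  intro h
  have h2 : T.isAnc (T.leaf i) (T.leaf j) := h ▸ T.lca_anc_right i j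
  exact hij (T.leaf.injective (T.eq_of_isAnc_leaf hi h2)).symm

lemma lca_ne_right {i j : Fin (T.n + 1)} (hj : j ≠ 0) (hij : i ≠ j) :
    T.lca i j ≠ T.leaf j := by
  intro h
  have h2 : T.isAnc (T.leaf j) (T.leaf i) := h ▸ T.lca_anc_left i j
  exact hij (T.leaf.injective (T.eq_of_isAnc_leaf hj h2))

lemma onPath_leaf_iff {m i j : Fin (T.n + 1)} (hm : m ≠ 0) (hij : i ≠ j) :
    T.onPath (T.leaf m) i j ↔ m = i ∨ m = j := by
  constructor
  · rintro ⟨-, -, h | h⟩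
    · exact Or.inl (T.leaf.injective (T.eq_of_isAnc_leaf hm h)).symm
    · exact Or.inr (T.leaf.injective (T.eq_of_isAnc_leaf hm h)).symm
  · rintro (rfl | rfl)
    · exact ⟨Ne.symm (T.lca_ne_left hm hij), T.lca_anc_left m j, Or.inl (T.isAnc_refl _)⟩
    · exact ⟨Ne.symm (T.lca_ne_right hm hij), T.lca_anc_right i m, Or.inr (T.isAnc_refl _)⟩

lemma onPath_child_zero {u₀ : T.V} (h1 : u₀ ≠ T.leaf 0) (h2 : T.par u₀ = T.leaf 0)
    {j : Fin (T.n + 1)} (hj : j ≠ 0) : T.onPath u₀ 0 j := by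
  refine ⟨?_, ?_, Or.inr ?_⟩
  · rw [T.lca_zero j]; exact h1
  · rw [T.lca_zero j]; exact T.isAnc_root u₀
  · exact T.isAnc_child' h1 h2 (fun h => hj (T.leaf.injective h))

lemma not_onPath_child {u₀ : T.V} (h1 : u₀ ≠ T.leaf 0) (h2 : T.par u₀ = T.leaf 0)
    {i j : Fin (T.n + 1)} (hi : i ≠ 0) (hj : j ≠ 0) : ¬ T.onPath u₀ i j := by
  rintro ⟨hne, hanc, -⟩
  have hai : T.isAnc u₀ (T.leaf i) := T.isAnc_child' h1 h2 (fun h => hi (T.leaf.injective h))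
  have haj : T.isAnc u₀ (T.leaf j) := T.isAnc_child' h1 h2 (fun h => hj (T.leaf.injective h))
  have hmin := T.lca_min i j u₀ hai haj
  exact hne (T.isAnc_antisymm hanc hmin).symm

/-- The weighting on edges: leaf-pendant edges and the root edge get weight `1`
(counted with multiplicity). -/
noncomputable def wt (e : T.NR) : ℕ :=
  (if e.1 ∈ Set.range T.leaf then 1 else 0) + (if T.par e.1 = T.leaf 0 then 1 else 0)

lemma sum_wt_mul (s : PairIdx T.n) : ∑ e : T.NR, T.wt e * Bmat T ℕ e s = 2 := by
  obtain ⟨⟨i, j⟩, hij⟩ := s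
  have hj : j ≠ 0 := by rintro rfl; simp [Fin.lt_def] at hij
  have hij' : i ≠ j := ne_of_lt hij
  obtain ⟨u₀, ⟨hu1, hu2⟩, huniq⟩ := T.root_unique_child
  have hsplit : ∀ e : T.NR, T.wt e * Bmat T ℕ e ⟨(i, j), hij⟩ =
      (if (e.1 ∈ Set.range T.leaf ∧ T.onPath e.1 i j) then 1 else 0)
      + (if (T.par e.1 = T.leaf 0 ∧ T.onPath e.1 i j) then 1 else 0) := by
    intro e
    have hB : Bmat T ℕ e ⟨(i, j), hij⟩ = if T.onPath e.1 i j then 1 else 0 := rfl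
    rcases Classical.em (T.onPath e.1 i j) with hO | hO
    · have e1 : (if (e.1 ∈ Set.range T.leaf ∧ T.onPath e.1 i j) then (1:ℕ) else 0)
          = if e.1 ∈ Set.range T.leaf then 1 else 0 := if_congr (and_iff_left hO) rfl rfl
      have e2 : (if (T.par e.1 = T.leaf 0 ∧ T.onPath e.1 i j) then (1:ℕ) else 0)
          = if T.par e.1 = T.leaf 0 then 1 else 0 := if_congr (and_iff_left hO) rfl rfl
      rw [hB, if_pos hO, mul_one, e1, e2, wt]
    · have e1 : (if (e.1 ∈ Set.range T.leaf ∧ T.onPath e.1 i j) then (1:ℕ) else 0) = 0 :=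
        if_neg (fun h => hO h.2)
      have e2 : (if (T.par e.1 = T.leaf 0 ∧ T.onPath e.1 i j) then (1:ℕ) else 0) = 0 :=
        if_neg (fun h => hO h.2)
      rw [hB, if_neg hO, mul_zero, e1, e2]
      omega
  rw [Finset.sum_congr rfl (fun e _ => hsplit e), Finset.sum_add_distrib,
    Finset.sum_boole, Finset.sum_boole]
  by_cases hi : i = 0
  · subst hi
    have h1 : Finset.univ.filter
        (fun e : T.NR => e.1 ∈ Set.range T.leaf ∧ T.onPath e.1 0 j)
        = {⟨T.leaf j, fun h => hj (T.leaf.injective h)⟩} := by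
      ext e
      rcases e with ⟨x, hx⟩
      simp only [Finset.mem_filter, Finset.mem_univ, true_and, Finset.mem_singleton]
      constructor
      · rintro ⟨⟨m, rfl⟩, hp⟩
        have hm : m ≠ 0 := fun h => hx (by rw [h])
        rcases (T.onPath_leaf_iff hm hij').mp hp with rfl | rfl
        · exact absurd rfl hm
        · rfl
      · intro hmk
        obtain rfl : x = T.leaf j := congrArg Subtype.val hmk
        exact ⟨⟨j, rfl⟩, (T.onPath_leaf_iff hj hij').mpr (Or.inr rfl)⟩
    have h2 : Finset.univ.filter
        (fun e : T.NR => T.par e.1 = T.leaf 0 ∧ T.onPath e.1 0 j) = {⟨u₀, hu1⟩} := by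
      ext e
      rcases e with ⟨x, hx⟩
      simp only [Finset.mem_filter, Finset.mem_univ, true_and, Finset.mem_singleton]
      constructor
      · rintro ⟨hp, -⟩
        exact Subtype.ext (huniq x ⟨hx, hp⟩)
      · intro hmk
        obtain rfl : x = u₀ := congrArg Subtype.val hmk
        exact ⟨hu2, T.onPath_child_zero hu1 hu2 hj⟩
    rw [h1, h2]
    simp
  · have h1 : Finset.univ.filter
        (fun e : T.NR => e.1 ∈ Set.range T.leaf ∧ T.onPath e.1 i j)
        = {⟨T.leaf i, fun h => hi (T.leaf.injective h)⟩,
           ⟨T.leaf j, fun h => hj (T.leaf.injective h)⟩} := by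
      ext e
      rcases e with ⟨x, hx⟩
      simp only [Finset.mem_filter, Finset.mem_univ, true_and, Finset.mem_insert,
        Finset.mem_singleton]
      constructor
      · rintro ⟨⟨m, rfl⟩, hp⟩
        have hm : m ≠ 0 := fun h => hx (by rw [h])
        rcases (T.onPath_leaf_iff hm hij').mp hp with rfl | rfl
        · exact Or.inl rfl
        · exact Or.inr rfl
      · rintro (hmk | hmk)
        · obtain rfl : x = T.leaf i := congrArg Subtype.val hmk
          exact ⟨⟨i, rfl⟩, (T.onPath_leaf_iff hi hij').mpr (Or.inl rfl)⟩
        · obtain rfl : x = T.leaf j := congrArg Subtype.val hmk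
          exact ⟨⟨j, rfl⟩, (T.onPath_leaf_iff hj hij').mpr (Or.inr rfl)⟩
    have h2 : Finset.univ.filter
        (fun e : T.NR => T.par e.1 = T.leaf 0 ∧ T.onPath e.1 i j) = ∅ := by
      ext e
      rcases e with ⟨x, hx⟩
      simp only [Finset.mem_filter, Finset.mem_univ, true_and, Finset.notMem_empty,
        iff_false, not_and]
      intro hp hpath
      have hxu : x = u₀ := huniq x ⟨hx, hp⟩
      subst hxu
      exact T.not_onPath_child hu1 hu2 hi hj hpath
    have hne12 : (⟨T.leaf i, fun h => hi (T.leaf.injective h)⟩ : T.NR)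
        ≠ ⟨T.leaf j, fun h => hj (T.leaf.injective h)⟩ := by
      intro h
      exact hij' (T.leaf.injective (congrArg Subtype.val h))
    rw [h1, h2, Finset.card_pair hne12]
    simp

lemma total_eq_of_mvec_B_eq {u v : PairIdx T.n →₀ ℕ}
    (h : Toric.mvec (Bmat T ℕ) u = Toric.mvec (Bmat T ℕ) v) :
    (u.sum fun _ k => k) = v.sum fun _ k => k :=
  Toric.sum_eq_of_mvec_eq _ T.wt 2 (by norm_num) (fun s => T.sum_wt_mul s) h

end PhyloTree

section OptionFinsupp

variable {α : Type*}

lemma total_option (u : Option α →₀ ℕ) :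
    (u.sum fun _ k => k) = u none + u.some.sum fun _ k => k :=
  Finsupp.sum_option_index _ _ (fun _ => rfl) (fun _ _ _ => rfl)

lemma option_decomp (u : Option α →₀ ℕ) :
    u = Finsupp.single none (u none) + Finsupp.mapDomain some u.some := by
  ext x
  rw [Finsupp.add_apply]
  cases x with
  | none =>
    rw [Finsupp.single_eq_same, Finsupp.mapDomain_notin_range _ _ (by simp), add_zero]
  | some a =>
    rw [Finsupp.single_eq_of_ne (by simp),
      Finsupp.mapDomain_apply (Option.some_injective _), Finsupp.some_apply, zero_add]

lemma some_mapDomain (u : α →₀ ℕ) :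
    (Finsupp.mapDomain (some : α → Option α) u).some = u := by
  ext a
  rw [Finsupp.some_apply, Finsupp.mapDomain_apply (Option.some_injective _)]

lemma mapDomain_none (u : α →₀ ℕ) :
    (Finsupp.mapDomain (some : α → Option α) u) none = 0 :=
  Finsupp.mapDomain_notin_range _ _ (by simp)

end OptionFinsupp

lemma mvec_Bstar_some (T : PhyloTree) (u : Option (PairIdx T.n) →₀ ℕ) (e : T.NR) :
    Toric.mvec (BstarMat T) u (some e) = Toric.mvec (Bmat T ℕ) u.some e := by
  rw [Toric.mvec_apply, Toric.mvec_apply,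
    Finsupp.sum_option_index _ _ (fun _ => mul_zero _) (fun _ _ _ => mul_add _ _ _)]
  have h0 : BstarMat T (some e) none = 0 := rfl
  rw [h0, zero_mul, zero_add]
  rfl

lemma mvec_Bstar_none (T : PhyloTree) (u : Option (PairIdx T.n) →₀ ℕ) :
    Toric.mvec (BstarMat T) u none = u none + u.some.sum fun _ k => k := by
  rw [Toric.mvec_apply,
    Finsupp.sum_option_index _ _ (fun _ => mul_zero _) (fun _ _ _ => mul_add _ _ _)]
  have h0 : BstarMat T none none = 1 := rfl
  have h1 : ∀ s, BstarMat T none (some s) = 1 := fun s => rfl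
  rw [h0, one_mul]
  congr 1
  refine Finsupp.sum_congr fun s _ => ?_
  rw [h1, one_mul]

/-- For every rooted tree `T`, the toric ideal `ker φ_{B*_T}` is the extension of the
toric ideal `ker φ_{B_T}` in the polynomial ring with the extra variable `p_⋆`, i.e. it
is generated by the image of `ker φ_{B_T}` under the natural inclusion of polynomial
rings. -/
theorem statement9 (T : PhyloTree) :
    RingHom.ker (toricMap (BstarMat T)) =
      Ideal.map (MvPolynomial.rename (R := ℂ) (some : PairIdx T.n → Option (PairIdx T.n)))
        (RingHom.ker (toricMap (Bmat T ℕ))) := by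
  apply le_antisymm
  · apply Toric.ker_le_of_binomials
    intro u v h
    have hsome : Toric.mvec (Bmat T ℕ) u.some = Toric.mvec (Bmat T ℕ) v.some := by
      ext e
      rw [← mvec_Bstar_some, ← mvec_Bstar_some, h]
    have htot : (u.some.sum fun _ k => k) = v.some.sum fun _ k => k :=
      T.total_eq_of_mvec_B_eq hsome
    have hnone : u none = v none := by
      have h0 : Toric.mvec (BstarMat T) u none = Toric.mvec (BstarMat T) v none := by
        rw [h]
      rw [mvec_Bstar_none, mvec_Bstar_none, htot] at h0
      omega
    have hK : (MvPolynomial.monomial u.some 1 - MvPolynomial.monomial v.some 1 :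
        MvPolynomial (PairIdx T.n) ℂ) ∈ RingHom.ker (toricMap (Bmat T ℕ)) := by
      rw [RingHom.mem_ker, map_sub, Toric.toricMap_monomial, Toric.toricMap_monomial,
        hsome, sub_self]
    have hmem := Ideal.mem_map_of_mem
      (MvPolynomial.rename (R := ℂ) (some : PairIdx T.n → Option (PairIdx T.n))) hK
    have key : (MvPolynomial.monomial u 1 - MvPolynomial.monomial v 1 :
        MvPolynomial (Option (PairIdx T.n)) ℂ)
        = MvPolynomial.monomial (Finsupp.single none (u none)) 1 *
          MvPolynomial.rename (some : PairIdx T.n → Option (PairIdx T.n))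
            (MvPolynomial.monomial u.some 1 - MvPolynomial.monomial v.some 1) := by
      rw [map_sub, MvPolynomial.rename_monomial, MvPolynomial.rename_monomial, mul_sub,
        MvPolynomial.monomial_mul, MvPolynomial.monomial_mul, one_mul]
      congr 1
      · rw [← option_decomp]
      · rw [hnone, ← option_decomp]
    rw [key]
    exact Ideal.mul_mem_left _ _ hmem
  · rw [Ideal.map_le_iff_le_comap]
    apply Toric.ker_le_of_binomials
    intro u v h
    rw [Ideal.mem_comap, RingHom.mem_ker, map_sub, map_sub, MvPolynomial.rename_monomial,
      MvPolynomial.rename_monomial, Toric.toricMap_monomial, Toric.toricMap_monomial]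
    have hmv : Toric.mvec (BstarMat T) (Finsupp.mapDomain some u)
        = Toric.mvec (BstarMat T) (Finsupp.mapDomain some v) := by
      have htot := T.total_eq_of_mvec_B_eq h
      ext x
      cases x with
      | none =>
        rw [mvec_Bstar_none, mvec_Bstar_none, mapDomain_none, mapDomain_none,
          some_mapDomain, some_mapDomain, htot]
      | some e =>
        rw [mvec_Bstar_some, mvec_Bstar_some, some_mapDomain, some_mapDomain, h]
    rw [hmv, sub_self]
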